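/- Let p ≥ 2 and B(x) = a_c + Σ_{m=0}^{L} a_m T_{p^m}(x), and let B_l(x) = B(T_{p^l}(x)) for l ≥ 1. Then ⟨B·B_l⟩ = a_c² + (1/2) Σ_{m=l}^{L} a_m a_{m−l} with respect to dx/(π√(1−x²)) on [−1,1] (where the sum is empty if l > L). -/

import Mathlib

open Polynomial Polynomial.Chebyshev MeasureTheory Finset
open Real intervalIntegral

lemma cosInt (k : ℤ) : ∫ θ in (0:ℝ)..π, Real.cos (k * θ) = if k = 0 then π else 0 := by
  split_ifs with h
  · simp [h, Real.pi_pos.le]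
  · have hk : (k:ℝ) ≠ 0 := Int.cast_ne_zero.mpr h
    have : ∫ θ in (0:ℝ)..π, Real.cos (k * θ) = (Real.sin (k * π) - Real.sin (k * 0)) / k := by
      rw [intervalIntegral.integral_comp_mul_left (fun x => Real.cos x) hk]
      simp [integral_cos, div_eq_inv_mul]
    rw [this]
    simp [Real.sin_int_mul_pi]

lemma cosPairInt (a b : ℕ) : ∫ θ in (0:ℝ)..π, Real.cos (a * θ) * Real.cos (b * θ)
    = if a = b then (if a = 0 then π else π/2) else 0 := by
  have h1 : ∀ θ : ℝ, Real.cos (a * θ) * Real.cos (b * θ)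
      = (Real.cos (((((a:ℤ)+(b:ℤ)):ℤ):ℝ) * θ) + Real.cos (((((a:ℤ)-(b:ℤ)):ℤ):ℝ) * θ)) / 2 := by
    intro θ
    have := Real.cos_add ((a:ℝ)*θ) ((b:ℝ)*θ)
    have h2 := Real.cos_sub ((a:ℝ)*θ) ((b:ℝ)*θ)
    push_cast
    ring_nf
    rw [Real.cos_add, Real.cos_sub]
    ring
  simp only [h1]
  rw [intervalIntegral.integral_div]
  rw [intervalIntegral.integral_add
    (Continuous.intervalIntegrable (by continuity) _ _)
    (Continuous.intervalIntegrable (by continuity) _ _)]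
  rw [cosInt, cosInt]
  split_ifs with h h' h1 h2 h3 <;> (try omega) <;> field_simp <;> try ring

lemma cos_image_Ioo : Real.cos '' Set.Ioo 0 π = Set.Ioo (-1 : ℝ) 1 := by
  ext y
  constructor
  · rintro ⟨θ, ⟨h0, hπ⟩, rfl⟩
    constructor
    · have : Real.cos π < Real.cos θ :=
        Real.cos_lt_cos_of_nonneg_of_le_pi h0.le le_rfl hπ
      simpa [Real.cos_pi] using this
    · have : Real.cos θ < Real.cos 0 :=
        Real.cos_lt_cos_of_nonneg_of_le_pi le_rfl hπ.le h0
      simpa using this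
  · intro ⟨h1, h2⟩
    refine ⟨Real.arccos y, ⟨Real.arccos_pos.mpr h2, ?_⟩, Real.cos_arccos h1.le h2.le⟩
    have := Real.arccos_le_pi y
    rcases this.lt_or_eq with h | h
    · exact h
    · exfalso
      have : y = -1 := by
        have := Real.cos_arccos h1.le h2.le
        rw [h, Real.cos_pi] at this
        linarith
      linarith

lemma weight_subst (f : ℝ → ℝ) :
    ∫ x in Set.Icc (-1:ℝ) 1, f x * (1 / (π * Real.sqrt (1 - x^2)))
      = ∫ θ in (0:ℝ)..π, f (Real.cos θ) / π := by
  have h1 : ∫ x in Set.Icc (-1:ℝ) 1, f x * (1 / (π * Real.sqrt (1 - x^2)))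
      = ∫ x in Set.Ioo (-1:ℝ) 1, f x * (1 / (π * Real.sqrt (1 - x^2))) := by
    rw [MeasureTheory.integral_Icc_eq_integral_Ioo]
  rw [h1, ← cos_image_Ioo,
    integral_image_eq_integral_abs_deriv_smul measurableSet_Ioo
      (fun θ _ => (Real.hasDerivAt_cos θ).hasDerivWithinAt)
      (Real.injOn_cos.mono (Set.Ioo_subset_Icc_self))]
  rw [MeasureTheory.setIntegral_congr_fun measurableSet_Ioo
    (g := fun θ => f (Real.cos θ) / π) ?_]
  · rw [← MeasureTheory.integral_Ioc_eq_integral_Ioo,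
      ← intervalIntegral.integral_of_le Real.pi_pos.le]
  · intro θ ⟨h0, hπ⟩
    have hs : 0 < Real.sin θ := Real.sin_pos_of_pos_of_lt_pi h0 hπ
    have : Real.sqrt (1 - Real.cos θ ^ 2) = Real.sin θ := by
      rw [show (1 : ℝ) - Real.cos θ ^ 2 = Real.sin θ ^ 2 by
        have := Real.sin_sq_add_cos_sq θ; linarith]
      exact Real.sqrt_sq hs.le
    simp only [smul_eq_mul, abs_neg, abs_of_pos hs, this]
    field_simp

/-- two-point correlation `⟨B·B_l⟩` for `B = a_c + Σ_{m=0}^L a_m T_{p^m}`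
and `B_l = B ∘ T_{p^l}`. -/
theorem chebyshev_lacunary_correlation
    (L : ℕ) (ac : ℝ) (a : ℕ → ℝ) (p : ℕ) (hp : 2 ≤ p) (l : ℕ) (hl : 1 ≤ l)
    (B : ℝ → ℝ)
    (hB : ∀ x, B x = ac + ∑ m ∈ range (L + 1), a m * (T ℝ (p ^ m : ℕ)).eval x) :
    ∫ x in Set.Icc (-1 : ℝ) 1,
        B x * B ((T ℝ (p ^ l : ℕ)).eval x) * (1 / (Real.pi * Real.sqrt (1 - x ^ 2)))
      = ac ^ 2 + (1 / 2) * ∑ m ∈ Icc l L, a m * a (m - l) := by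
  rw [weight_subst (fun x => B x * B ((T ℝ (p ^ l : ℕ)).eval x))]
  have hπ := Real.pi_pos
  -- pointwise form of the integrand
  have hpt : ∀ θ : ℝ, B (Real.cos θ) * B ((T ℝ (p ^ l : ℕ)).eval (Real.cos θ)) / π
      = (ac^2 + (∑ m ∈ range (L+1), ac * a m * Real.cos ((p^m : ℕ) * θ))
        + (∑ n ∈ range (L+1), ac * a n * Real.cos ((p^(n+l) : ℕ) * θ))
        + ∑ mn ∈ range (L+1) ×ˢ range (L+1),
            a mn.1 * a mn.2 * (Real.cos ((p^mn.1 : ℕ) * θ) * Real.cos ((p^(mn.2+l) : ℕ) * θ))) / π := by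
    intro θ
    have e1 : ∀ m : ℕ, (T ℝ (p ^ m : ℕ)).eval (Real.cos θ) = Real.cos ((p^m : ℕ) * θ) := by
      intro m
      have := T_real_cos θ ((p^m : ℕ) : ℤ)
      push_cast at this ⊢
      exact this
    have e2 : ∀ n : ℕ, (T ℝ (p ^ n : ℕ)).eval (Real.cos ((p^l : ℕ) * θ))
        = Real.cos ((p^(n+l) : ℕ) * θ) := by
      intro n
      have h := T_real_cos (((p^l : ℕ) : ℝ) * θ) ((p^n : ℕ) : ℤ)
      rw [h]
      push_cast
      ring_nf
    rw [hB, hB, e1 l]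
    simp only [e1, e2]
    congr 1
    rw [Finset.sum_product]
    have hA : (∑ m ∈ range (L+1), a m * Real.cos ((p^m : ℕ) * θ)) * ac
        = ∑ m ∈ range (L+1), ac * a m * Real.cos ((p^m : ℕ) * θ) := by
      rw [Finset.sum_mul]; exact Finset.sum_congr rfl fun m _ => by ring
    have hB2 : ac * (∑ n ∈ range (L+1), a n * Real.cos ((p^(n+l) : ℕ) * θ))
        = ∑ n ∈ range (L+1), ac * a n * Real.cos ((p^(n+l) : ℕ) * θ) := by
      rw [Finset.mul_sum]; exact Finset.sum_congr rfl fun n _ => by ring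
    have hC : (∑ m ∈ range (L+1), a m * Real.cos ((p^m : ℕ) * θ))
        * (∑ n ∈ range (L+1), a n * Real.cos ((p^(n+l) : ℕ) * θ))
        = ∑ m ∈ range (L+1), ∑ n ∈ range (L+1),
            a m * a n * (Real.cos ((p^m : ℕ) * θ) * Real.cos ((p^(n+l) : ℕ) * θ)) := by
      rw [Finset.sum_mul_sum]
      exact Finset.sum_congr rfl fun m _ => Finset.sum_congr rfl fun n _ => by ring
    rw [← hA, ← hB2, ← hC]
    ring
  have hπ' : (π : ℝ) ≠ 0 := ne_of_gt hπ
  have cosIntNat : ∀ k : ℕ, k ≠ 0 → (∫ θ in (0:ℝ)..π, Real.cos (k * θ)) = 0 := by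
    intro k hk
    have h := cosInt (k : ℤ)
    rw [if_neg (by exact_mod_cast hk)] at h
    push_cast at h
    exact h
  have hppos : ∀ m : ℕ, p ^ m ≠ 0 := fun m => pow_ne_zero m (by omega)
  simp only [hpt]
  rw [intervalIntegral.integral_div]
  have ic : ∀ c : ℝ, Continuous fun θ : ℝ => Real.cos (c * θ) :=
    fun c => Real.continuous_cos.comp (continuous_const.mul continuous_id)
  have i1 : IntervalIntegrable (fun θ => ∑ m ∈ range (L+1), ac * a m * Real.cos ((p^m : ℕ) * θ))
      volume 0 π :=
    Continuous.intervalIntegrable (continuous_finset_sum _ fun m _ => (continuous_const.mul (ic _))) _ _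
  have i2 : IntervalIntegrable (fun θ => ∑ n ∈ range (L+1), ac * a n * Real.cos ((p^(n+l) : ℕ) * θ))
      volume 0 π :=
    Continuous.intervalIntegrable (continuous_finset_sum _ fun n _ => (continuous_const.mul (ic _))) _ _
  have i3 : IntervalIntegrable (fun θ => ∑ mn ∈ range (L+1) ×ˢ range (L+1),
      a mn.1 * a mn.2 * (Real.cos ((p^mn.1 : ℕ) * θ) * Real.cos ((p^(mn.2+l) : ℕ) * θ)))
      volume 0 π :=
    Continuous.intervalIntegrable (continuous_finset_sum _ fun mn _ =>
      (continuous_const.mul ((ic _).mul (ic _)))) _ _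
  rw [intervalIntegral.integral_add ((((_root_.intervalIntegrable_const).add i1).add i2)) i3,
    intervalIntegral.integral_add ((_root_.intervalIntegrable_const).add i1) i2,
    intervalIntegral.integral_add (_root_.intervalIntegrable_const) i1]
  have hconst : (∫ _ in (0:ℝ)..π, (ac^2 : ℝ)) = π * ac^2 := by
    simp [mul_comm]
  have hS1 : (∫ θ in (0:ℝ)..π, ∑ m ∈ range (L+1), ac * a m * Real.cos ((p^m : ℕ) * θ)) = 0 := by
    rw [intervalIntegral.integral_finset_sum (f := fun m θ => ac * a m * Real.cos ((p^m : ℕ) * θ))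
      (fun m _ => Continuous.intervalIntegrable (continuous_const.mul (ic _)) _ _)]
    apply Finset.sum_eq_zero
    intro m _
    rw [intervalIntegral.integral_const_mul, cosIntNat _ (hppos m), mul_zero]
  have hS2 : (∫ θ in (0:ℝ)..π, ∑ n ∈ range (L+1), ac * a n * Real.cos ((p^(n+l) : ℕ) * θ)) = 0 := by
    rw [intervalIntegral.integral_finset_sum (f := fun n θ => ac * a n * Real.cos ((p^(n+l) : ℕ) * θ))
      (fun n _ => Continuous.intervalIntegrable (continuous_const.mul (ic _)) _ _)]
    apply Finset.sum_eq_zero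
    intro n _
    rw [intervalIntegral.integral_const_mul, cosIntNat _ (hppos _), mul_zero]
  have hSS : (∫ θ in (0:ℝ)..π, ∑ mn ∈ range (L+1) ×ˢ range (L+1),
      a mn.1 * a mn.2 * (Real.cos ((p^mn.1 : ℕ) * θ) * Real.cos ((p^(mn.2+l) : ℕ) * θ)))
      = (π/2) * ∑ m ∈ Icc l L, a m * a (m - l) := by
    rw [intervalIntegral.integral_finset_sum (f := fun (mn : ℕ × ℕ) (θ : ℝ) =>
        a mn.1 * a mn.2 * (Real.cos ((p^mn.1 : ℕ) * θ) * Real.cos ((p^(mn.2+l) : ℕ) * θ)))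
      (fun mn _ => Continuous.intervalIntegrable (continuous_const.mul ((ic _).mul (ic _))) _ _)]
    have step : ∀ mn : ℕ × ℕ, (∫ θ in (0:ℝ)..π,
        a mn.1 * a mn.2 * (Real.cos ((p^mn.1 : ℕ) * θ) * Real.cos ((p^(mn.2+l) : ℕ) * θ)))
        = if p^mn.1 = p^(mn.2+l) then a mn.1 * a mn.2 * (π/2) else 0 := by
      intro mn
      rw [intervalIntegral.integral_const_mul, cosPairInt]
      split_ifs with h1 h2
      · exact absurd h2 (hppos _)
      · ring
      · exact mul_zero _
    simp only [step]
    rw [Finset.sum_product]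
    have inner : ∀ m ∈ range (L+1),
        (∑ n ∈ range (L+1), if p^m = p^(n+l) then a m * a n * (π/2) else 0)
        = if l ≤ m then a m * a (m-l) * (π/2) else 0 := by
      intro m hm
      rw [Finset.mem_range] at hm
      by_cases hml : l ≤ m
      · rw [if_pos hml, Finset.sum_eq_single (m - l)]
        · rw [if_pos (by rw [Nat.sub_add_cancel hml])]
        · intro n _ hne
          rw [if_neg]
          intro hc
          exact hne (by have := Nat.pow_right_injective hp hc; omega)
        · intro hmem
          exact absurd (Finset.mem_range.mpr (by omega)) hmem
      · rw [if_neg hml]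
        apply Finset.sum_eq_zero
        intro n _
        rw [if_neg]
        intro hc
        have := Nat.pow_right_injective hp hc
        omega
    rw [Finset.sum_congr rfl inner, Finset.sum_ite, Finset.sum_const_zero, add_zero]
    rw [Finset.mul_sum]
    rw [show Finset.filter (fun m => l ≤ m) (range (L+1)) = Icc l L from by
      ext m; simp [Finset.mem_filter, Finset.mem_range, Finset.mem_Icc]; omega]
    exact Finset.sum_congr rfl fun m _ => by ring
  rw [hconst, hS1, hS2, hSS]
  field_simp
  ring
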